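/- Let n ≥ 3 be an integer and let t₀ ∈ ℝ. The function v : ℝ → ℝ defined by v(t) = (cosh(t − t₀))^((2−n)/2) is positive, twice differentiable, satisfies the Delaunay ODE v''(t) − ((n−2)²/4)·v(t) + (n·(n−2)/4)·v(t)^((n+2)/(n−2)) = 0 for all t ∈ ℝ, and H(v(t), v'(t)) = 0 for all t ∈ ℝ. -/

import Mathlib

/-- The Delaunay ODE: `v'' − ((n−2)²/4)·v + (n·(n−2)/4)·v^((n+2)/(n−2)) = 0`. -/
def DelaunayODE (n : ℕ) (v : ℝ → ℝ) : Prop :=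
  ∀ t : ℝ, deriv (deriv v) t - (((n : ℝ) - 2) ^ 2 / 4) * v t
    + ((n : ℝ) * ((n : ℝ) - 2) / 4) * v t ^ (((n : ℝ) + 2) / ((n : ℝ) - 2)) = 0

/-- The Hamiltonian energy of the Delaunay ODE:
`H(v, w) = w² − ((n−2)²/4)·v² + ((n−2)²/4)·v^(2n/(n−2))`. -/
noncomputable def delaunayH (n : ℕ) (v w : ℝ) : ℝ :=
  w ^ 2 - (((n : ℝ) - 2) ^ 2 / 4) * v ^ 2
    + (((n : ℝ) - 2) ^ 2 / 4) * v ^ (2 * (n : ℝ) / ((n : ℝ) - 2))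

theorem stmt_8 (n : ℕ) (hn : 3 ≤ n) (t₀ : ℝ)
    (v : ℝ → ℝ) (hv : ∀ t : ℝ, v t = Real.cosh (t - t₀) ^ ((2 - (n : ℝ)) / 2)) :
    (∀ t : ℝ, 0 < v t) ∧ Differentiable ℝ v ∧ Differentiable ℝ (deriv v) ∧
      DelaunayODE n v ∧ ∀ t : ℝ, delaunayH n (v t) (deriv v t) = 0 := by
  have hvf : v = fun t => Real.cosh (t - t₀) ^ ((2 - (n : ℝ)) / 2) := funext hv
  subst hvf
  set a : ℝ := (2 - (n : ℝ)) / 2 with ha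
  have hN : (3 : ℝ) ≤ (n : ℝ) := by exact_mod_cast hn
  have hne : (n : ℝ) - 2 ≠ 0 := by linarith
  have hpos : ∀ t : ℝ, 0 < Real.cosh (t - t₀) := fun t => Real.cosh_pos _
  have hc : ∀ t : ℝ, HasDerivAt (fun s => Real.cosh (s - t₀)) (Real.sinh (t - t₀)) t := by
    intro t
    simpa [Function.comp_def] using (Real.hasDerivAt_cosh (t - t₀)).comp t ((hasDerivAt_id t).sub_const t₀)
  have hs : ∀ t : ℝ, HasDerivAt (fun s => Real.sinh (s - t₀)) (Real.cosh (t - t₀)) t := by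
    intro t
    simpa [Function.comp_def] using (Real.hasDerivAt_sinh (t - t₀)).comp t ((hasDerivAt_id t).sub_const t₀)
  have hD1 : ∀ t : ℝ, HasDerivAt (fun s => Real.cosh (s - t₀) ^ a)
      (Real.sinh (t - t₀) * a * Real.cosh (t - t₀) ^ (a - 1)) t :=
    fun t => (hc t).rpow_const (Or.inl (hpos t).ne')
  have hderiv : deriv (fun t => Real.cosh (t - t₀) ^ a)
      = fun t => Real.sinh (t - t₀) * a * Real.cosh (t - t₀) ^ (a - 1) :=
    funext fun t => (hD1 t).deriv
  have hD2 : ∀ t : ℝ, HasDerivAt (fun s => Real.sinh (s - t₀) * a * Real.cosh (s - t₀) ^ (a - 1))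
      (Real.cosh (t - t₀) * a * (Real.cosh (t - t₀) ^ (a - 1))
        + Real.sinh (t - t₀) * a * (Real.sinh (t - t₀) * (a - 1) * Real.cosh (t - t₀) ^ (a - 1 - 1))) t := by
    intro t
    exact ((hs t).mul_const a).mul ((hc t).rpow_const (Or.inl (hpos t).ne'))
  have hderiv2 : deriv (deriv (fun t => Real.cosh (t - t₀) ^ a))
      = fun t => Real.cosh (t - t₀) * a * (Real.cosh (t - t₀) ^ (a - 1))
        + Real.sinh (t - t₀) * a * (Real.sinh (t - t₀) * (a - 1) * Real.cosh (t - t₀) ^ (a - 1 - 1)) := by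
    rw [hderiv]; exact funext fun t => (hD2 t).deriv
  refine ⟨fun t => Real.rpow_pos_of_pos (hpos t) _, fun t => (hD1 t).differentiableAt,
    ?_, ?_, ?_⟩
  · rw [hderiv]; exact fun t => (hD2 t).differentiableAt
  · -- ODE
    intro t
    rw [hderiv2]
    beta_reduce
    set C := Real.cosh (t - t₀) with hC
    set S := Real.sinh (t - t₀) with hS
    have hCpos := hpos t
    have hsq : C ^ 2 = S ^ 2 + 1 := Real.cosh_sq _
    have e1 : C ^ a = C ^ (a - 2) * C ^ 2 := by
      rw [← Real.rpow_two, ← Real.rpow_add hCpos]; ring_nf; rfl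
    have e2 : C ^ (a - 1) = C ^ (a - 2) * C := by
      rw [show a - 1 = (a - 2) + 1 by ring, Real.rpow_add hCpos, Real.rpow_one]
    have e3 : (C ^ a) ^ (((n : ℝ) + 2) / ((n : ℝ) - 2)) = C ^ (a - 2) := by
      rw [← Real.rpow_mul hCpos.le]
      congr 1
      field_simp [ha]
      ring
    have e4 : a - 1 - 1 = a - 2 := by ring
    have h1 : ((n : ℝ) - 2) ^ 2 / 4 = a ^ 2 := by rw [ha]; ring
    have h2 : (n : ℝ) * ((n : ℝ) - 2) / 4 = a * (a - 1) := by rw [ha]; ring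
    rw [e3, e4, e1, e2, h1, h2]
    linear_combination (-(a * (a - 1) * C ^ (a - 2))) * hsq
  · -- Hamiltonian
    intro t
    rw [hderiv]
    simp only [delaunayH]
    set C := Real.cosh (t - t₀) with hC
    set S := Real.sinh (t - t₀) with hS
    have hCpos := hpos t
    have hsq : C ^ 2 = S ^ 2 + 1 := Real.cosh_sq _
    have e2 : C ^ (a - 1) = C ^ (a - 2) * C := by
      rw [show a - 1 = (a - 2) + 1 by ring, Real.rpow_add hCpos, Real.rpow_one]
    have e1 : (C ^ a) ^ (2 : ℕ) = (C ^ (a - 2)) ^ (2 : ℕ) * C ^ (2 : ℕ) * C ^ (2 : ℕ) := by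
      rw [← Real.rpow_natCast (C ^ a), ← Real.rpow_mul hCpos.le,
        ← Real.rpow_natCast (C ^ (a - 2)), ← Real.rpow_mul hCpos.le,
        ← Real.rpow_natCast C 2, ← Real.rpow_add hCpos, ← Real.rpow_add hCpos]
      congr 1
      push_cast; ring
    have e5 : (C ^ a) ^ (2 * (n : ℝ) / ((n : ℝ) - 2)) = (C ^ (a - 2)) ^ (2 : ℕ) * C ^ (2 : ℕ) := by
      rw [← Real.rpow_mul hCpos.le, ← Real.rpow_natCast (C ^ (a - 2)),
        ← Real.rpow_mul hCpos.le, ← Real.rpow_natCast C 2, ← Real.rpow_add hCpos]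
      congr 1
      field_simp [ha]
      ring
    have h1 : ((n : ℝ) - 2) ^ 2 / 4 = a ^ 2 := by rw [ha]; ring
    rw [e5, e1, e2, h1]
    linear_combination (-(a ^ 2 * (C ^ (a - 2)) ^ 2 * C ^ 2)) * hsq
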